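/- Suppose C ∈ SL(2,ℝ) satisfies ‖C‖ ≥ μ^m with μ > 1, and B ∈ SL(2,ℝ) is hyperbolic. If the angle between the most expanded direction u(C) of C (equivalently, the most contracted direction of C⁻¹) and the most contracted direction s(B) of B is 2θ with 0 < 2θ < π/2, then ‖B·C‖ ≥ ‖B‖·‖C‖·sin(2θ) ≥ ‖B‖·μ^m·sin(2θ). -/

import Mathlib

noncomputable def act (A : Matrix (Fin 2) (Fin 2) ℝ) :
    EuclideanSpace ℝ (Fin 2) →L[ℝ] EuclideanSpace ℝ (Fin 2) :=
  Matrix.toEuclideanCLM (𝕜 := ℝ) A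

lemma act_apply (A : Matrix (Fin 2) (Fin 2) ℝ) (x : EuclideanSpace ℝ (Fin 2)) (i : Fin 2) :
    act A x i = A i 0 * x 0 + A i 1 * x 1 := by
  have h := congrFun (Matrix.ofLp_toEuclideanCLM (𝕜 := ℝ) A x) i
  simpa [Matrix.mulVec, dotProduct, Fin.sum_univ_two, act] using h

lemma act_mul (A B : Matrix (Fin 2) (Fin 2) ℝ) (x : EuclideanSpace ℝ (Fin 2)) :
    act (A * B) x = act A (act B x) := by
  simp [act, map_mul]

noncomputable def Dform (x y : EuclideanSpace ℝ (Fin 2)) : ℝ := x 0 * y 1 - x 1 * y 0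

lemma inner_two (x y : EuclideanSpace ℝ (Fin 2)) :
    (inner ℝ x y : ℝ) = x 0 * y 0 + x 1 * y 1 := by
  simp [PiLp.inner_apply, Fin.sum_univ_two]
  ring

lemma lagrange (x y : EuclideanSpace ℝ (Fin 2)) :
    Dform x y ^ 2 + (inner ℝ x y : ℝ) ^ 2 = ‖x‖ ^ 2 * ‖y‖ ^ 2 := by
  have hx : (inner ℝ x x : ℝ) = ‖x‖ ^ 2 := real_inner_self_eq_norm_sq x
  have hy : (inner ℝ y y : ℝ) = ‖y‖ ^ 2 := real_inner_self_eq_norm_sq y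
  rw [← hx, ← hy, inner_two, inner_two, inner_two, Dform]
  ring

lemma Dform_act (A : Matrix (Fin 2) (Fin 2) ℝ) (x y : EuclideanSpace ℝ (Fin 2)) :
    Dform (act A x) (act A y) = A.det * Dform x y := by
  simp only [Dform, act_apply, Matrix.det_fin_two]
  ring

lemma key_lemma (B : Matrix (Fin 2) (Fin 2) ℝ) (hdetB : B.det = 1)
    (hB : 0 < ‖act B‖) (sB : EuclideanSpace ℝ (Fin 2))
    (hsB : ‖sB‖ = 1) (hsB' : ‖act B sB‖ = ‖act B‖⁻¹)
    (v : EuclideanSpace ℝ (Fin 2)) (s : ℝ) (hs : 0 ≤ s)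
    (hsin : Real.sin (InnerProductGeometry.angle v sB) = s) :
    ‖act B‖ * ‖v‖ * s ≤ ‖act B v‖ := by
  set a : ℝ := inner ℝ v sB with ha
  set w : EuclideanSpace ℝ (Fin 2) := v - a • sB with hwdef
  have hsB2 : (inner ℝ sB sB : ℝ) = 1 := by
    rw [real_inner_self_eq_norm_sq, hsB]; norm_num
  have hvv : (inner ℝ v v : ℝ) = ‖v‖ ^ 2 := real_inner_self_eq_norm_sq v
  have hcomm : (inner ℝ sB v : ℝ) = a := by rw [ha, real_inner_comm]
  have hwperp : (inner ℝ w sB : ℝ) = 0 := by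
    rw [hwdef, inner_sub_left, real_inner_smul_left, hsB2]; ring
  have hwv : ‖w‖ ^ 2 = ‖v‖ ^ 2 - a ^ 2 := by
    rw [← real_inner_self_eq_norm_sq, hwdef, inner_sub_left, inner_sub_right, inner_sub_right,
      real_inner_smul_left, real_inner_smul_left, real_inner_smul_right, real_inner_smul_right,
      hsB2, hvv, hcomm, ← ha]
    ring
  have hva : a ^ 2 ≤ ‖v‖ ^ 2 := by
    have h := abs_real_inner_le_norm v sB
    rw [hsB, mul_one, ← ha] at h
    nlinarith [abs_nonneg a, sq_abs a]
  have hsin_eq := InnerProductGeometry.sin_angle_mul_norm_mul_norm v sB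
  rw [hsin, hsB, hvv, hsB2, ← ha] at hsin_eq
  have hw2 : ‖w‖ ^ 2 = ‖v‖ ^ 2 * s ^ 2 := by
    have h2 : (s * (‖v‖ * 1)) ^ 2 = ‖v‖ ^ 2 * 1 - a * a := by
      rw [hsin_eq, Real.sq_sqrt (by nlinarith)]
    rw [hwv]; linear_combination (-1 : ℝ) * h2
  have hv_eq : v = a • sB + w := by rw [hwdef]; abel
  clear_value a w
  clear hsin_eq hvv hcomm hsin ha hwdef hwv
  -- Dform facts
  have hperp' : (inner ℝ sB w : ℝ) = 0 := by rw [real_inner_comm]; exact hwperp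
  have hDsw : Dform sB w ^ 2 = ‖w‖ ^ 2 := by
    have h := lagrange sB w
    rw [hperp', hsB] at h
    linarith [h]
  have hDTsw : Dform (act B sB) (act B w) ^ 2 = ‖w‖ ^ 2 := by
    rw [Dform_act, hdetB, one_mul, hDsw]
  have hlagT := lagrange (act B sB) (act B w)
  rw [hsB'] at hlagT
  have hTwle : ‖act B w‖ ≤ ‖act B‖ * ‖w‖ := (act B).le_opNorm w
  have hTwnn : (0:ℝ) ≤ ‖act B w‖ := norm_nonneg _
  have hwnn : (0:ℝ) ≤ ‖w‖ := norm_nonneg _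
  have hinvsq : (‖act B‖⁻¹) ^ 2 * ‖act B‖ ^ 2 = 1 := by field_simp
  have h3 : ‖w‖ ^ 2 ≤ (‖act B‖⁻¹) ^ 2 * ‖act B w‖ ^ 2 := by
    nlinarith [hlagT, hDTsw, sq_nonneg (inner ℝ (act B sB) (act B w) : ℝ)]
  have step : ‖act B‖ ^ 2 * ‖w‖ ^ 2 ≤ ‖act B w‖ ^ 2 := by
    calc ‖act B‖ ^ 2 * ‖w‖ ^ 2 ≤ ‖act B‖ ^ 2 * ((‖act B‖⁻¹) ^ 2 * ‖act B w‖ ^ 2) :=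
          mul_le_mul_of_nonneg_left h3 (by positivity)
      _ = (‖act B‖⁻¹) ^ 2 * ‖act B‖ ^ 2 * ‖act B w‖ ^ 2 := by ring
      _ = ‖act B w‖ ^ 2 := by rw [hinvsq, one_mul]
  -- orthogonality of images
  have horth : (inner ℝ (act B sB) (act B w) : ℝ) = 0 := by
    have h4 : (‖act B‖⁻¹) ^ 2 * ‖act B w‖ ^ 2 ≤ ‖w‖ ^ 2 := by
      calc (‖act B‖⁻¹) ^ 2 * ‖act B w‖ ^ 2 ≤ (‖act B‖⁻¹) ^ 2 * (‖act B‖ * ‖w‖) ^ 2 :=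
            mul_le_mul_of_nonneg_left (pow_le_pow_left₀ hTwnn hTwle 2) (by positivity)
        _ = ((‖act B‖⁻¹) ^ 2 * ‖act B‖ ^ 2) * ‖w‖ ^ 2 := by ring
        _ = ‖w‖ ^ 2 := by rw [hinvsq, one_mul]
    have h5 : (inner ℝ (act B sB) (act B w) : ℝ) ^ 2 ≤ 0 := by linarith [hlagT, hDTsw, h4]
    have h6 : (inner ℝ (act B sB) (act B w) : ℝ) ^ 2 = 0 :=
      le_antisymm h5 (sq_nonneg _)
    exact (pow_eq_zero_iff two_ne_zero).mp h6
  -- norm of B v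
  have hBv : act B v = a • act B sB + act B w := by
    rw [hv_eq, map_add, map_smul]
  have horth' : (inner ℝ (act B w) (act B sB) : ℝ) = 0 := by
    rw [real_inner_comm]; exact horth
  have hBv2 : ‖act B v‖ ^ 2 = a ^ 2 * ‖act B sB‖ ^ 2 + ‖act B w‖ ^ 2 := by
    rw [← real_inner_self_eq_norm_sq, hBv, inner_add_left, inner_add_right, inner_add_right,
      real_inner_smul_left, real_inner_smul_left, real_inner_smul_right, real_inner_smul_right,
      real_inner_self_eq_norm_sq, real_inner_self_eq_norm_sq, horth, horth']
    ring
  have h1 : (‖act B‖ * ‖v‖ * s) ^ 2 ≤ ‖act B v‖ ^ 2 := by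
    have e2 : (‖act B‖ * ‖v‖ * s) ^ 2 = ‖act B‖ ^ 2 * (‖v‖ ^ 2 * s ^ 2) := by ring
    rw [e2, ← hw2, hBv2]
    linarith [step, mul_nonneg (sq_nonneg a) (sq_nonneg ‖act B sB‖)]
  exact le_of_pow_le_pow_left₀ two_ne_zero (norm_nonneg (act B v)) h1

/-- Suppose `C ∈ SL(2,ℝ)` with `‖C‖ ≥ μ^m` (`μ > 1`) and `B ∈ SL(2,ℝ)` is
hyperbolic.  If the angle between the most expanded direction of `C` — realized,
as a projective direction, by `C·u(C)`, the most contracted direction of `C⁻¹` —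
and the most contracted direction `s(B)` of `B` is `2θ` with `0 < 2θ < π/2`, then
`‖B·C‖ ≥ ‖B‖·‖C‖·sin(2θ) ≥ ‖B‖·μ^m·sin(2θ)`. -/
theorem stmt19 (B C : Matrix (Fin 2) (Fin 2) ℝ)
    (hdetB : B.det = 1) (hdetC : C.det = 1)
    (mu m : ℝ) (hmu : 1 < mu) (hC : mu ^ m ≤ ‖act C‖) (hB : 1 < ‖act B‖)
    (uC sB : EuclideanSpace ℝ (Fin 2))
    (huC : ‖uC‖ = 1) (huC' : ‖act C uC‖ = ‖act C‖)
    (hsB : ‖sB‖ = 1) (hsB' : ‖act B sB‖ = ‖act B‖⁻¹)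
    (θ : ℝ) (hθ0 : 0 < 2 * θ) (hθ1 : 2 * θ < Real.pi / 2)
    (hangle : InnerProductGeometry.angle (act C uC) sB = 2 * θ) :
    ‖act B‖ * ‖act C‖ * Real.sin (2 * θ) ≤ ‖act (B * C)‖ ∧
      ‖act B‖ * (mu ^ m) * Real.sin (2 * θ) ≤
        ‖act B‖ * ‖act C‖ * Real.sin (2 * θ) := by
  have hsin : 0 < Real.sin (2 * θ) := Real.sin_pos_of_pos_of_lt_pi hθ0
    (lt_trans hθ1 (by linarith [Real.pi_pos]))
  have hBpos : (0:ℝ) < ‖act B‖ := lt_trans one_pos hB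
  constructor
  · have hkey := key_lemma B hdetB hBpos sB hsB hsB' (act C uC) (Real.sin (2 * θ)) hsin.le
      (by rw [hangle])
    rw [huC'] at hkey
    calc ‖act B‖ * ‖act C‖ * Real.sin (2 * θ) ≤ ‖act B (act C uC)‖ := hkey
      _ = ‖act (B * C) uC‖ := by rw [act_mul]
      _ ≤ ‖act (B * C)‖ * ‖uC‖ := (act (B * C)).le_opNorm uC
      _ = ‖act (B * C)‖ := by rw [huC, mul_one]
  · exact mul_le_mul_of_nonneg_right (mul_le_mul_of_nonneg_left hC hBpos.le) hsin.le
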